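/- Invariant measures of CM3: every finitely additive probability measure μ on the Borel σ-algebra of [0,1] that is invariant for CM3 (Aμ = μ) satisfies μ((0,1)) = 0; consequently the set of invariant finitely additive probability measures of CM3 is exactly the set of convex combinations t·δ₀ + (1−t)·δ₁, t ∈ [0,1], and in particular all invariant finitely additive measures of CM3 are countably additive. -/

import Mathlib

open MeasureTheory Set Filter Topology Function

/-- A bounded finitely additive set function on the σ-algebra. -/
def IsFinAdd {X : Type*} [MeasurableSpace X] (μ : Set X → ℝ) : Prop :=
  μ ∅ = 0 ∧ ∀ E F : Set X, MeasurableSet E → MeasurableSet F → Disjoint E F →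
    μ (E ∪ F) = μ E + μ F

/-- Nonnegativity on measurable sets. -/
def IsNonnegSF {X : Type*} [MeasurableSpace X] (μ : Set X → ℝ) : Prop :=
  ∀ E : Set X, MeasurableSet E → 0 ≤ μ E

/-- Countable additivity on the σ-algebra. -/
def IsCtblAdd {X : Type*} [MeasurableSpace X] (μ : Set X → ℝ) : Prop :=
  ∀ E : ℕ → Set X, (∀ n, MeasurableSet (E n)) → Pairwise (Disjoint on E) →
    HasSum (fun n => μ (E n)) (μ (⋃ n, E n))

/-- A nonnegative finitely additive measure is purely finitely additive if the only
countably additive measure `lam` with `0 ≤ lam ≤ μ` is `lam = 0`. -/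
def IsPurelyFinAdd {X : Type*} [MeasurableSpace X] (μ : Set X → ℝ) : Prop :=
  ∀ lam : Set X → ℝ, IsFinAdd lam → IsCtblAdd lam →
    (∀ E, MeasurableSet E → 0 ≤ lam E) → (∀ E, MeasurableSet E → lam E ≤ μ E) →
    ∀ E, MeasurableSet E → lam E = 0

/-- The integral of a bounded measurable function with respect to a (finitely additive)
set function, defined by the layer-cake formula. -/
noncomputable def faIntegral {X : Type*} [MeasurableSpace X] (μ : Set X → ℝ) (f : X → ℝ) : ℝ :=
  (∫ t in Set.Ioi (0:ℝ), μ {x | t < f x}) - (∫ t in Set.Ioi (0:ℝ), μ {x | f x < -t})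

/-- The Dirac measure at `y`, as a set function. -/
noncomputable def diracSF (y : ℝ) (E : Set ℝ) : ℝ := E.indicator (fun _ => (1:ℝ)) y

/-- The transition function of CM1: `p(x,·) = x·δ_{x²} + (1-x)·δ₀` on `(0,1)`,
`p(0,·) = δ₀`, `p(1,·) = δ₁` (the formula below specializes correctly at `0` and `1`). -/
noncomputable def p1 (x : ℝ) (E : Set ℝ) : ℝ :=
  x * diracSF (x ^ 2) E + (1 - x) * diracSF 0 E

/-- The transition function of CM2: `p(x,·) = (1-x)·δ_{x²} + x·δ₀` on `(0,1)`,
`p(0,·) = δ₀`, `p(1,·) = δ₁`. -/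
noncomputable def p2 (x : ℝ) (E : Set ℝ) : ℝ :=
  if x = 1 then diracSF 1 E else (1 - x) * diracSF (x ^ 2) E + x * diracSF 0 E

/-- The transition function of CM3: the CM1 rule on `[0,1/2]`, the CM2 rule on `(1/2,1)`,
`p(1,·) = δ₁`. -/
noncomputable def p3 (x : ℝ) (E : Set ℝ) : ℝ :=
  if x = 1 then diracSF 1 E
  else if x ≤ 1 / 2 then x * diracSF (x ^ 2) E + (1 - x) * diracSF 0 E
  else (1 - x) * diracSF (x ^ 2) E + x * diracSF 0 E

/-- The `n`-step transition function of CM1 (`p1n 0` is the identity kernel, and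
`p1n (n+1) x E = ∫ p1n n (y,E) p(x,dy)` is the integral convolution). -/
noncomputable def p1n : ℕ → ℝ → Set ℝ → ℝ
  | 0 => fun x E => diracSF x E
  | n + 1 => fun x E => faIntegral (p1 x) fun y => p1n n y E

/-- The `n`-step transition function of CM2. -/
noncomputable def p2n : ℕ → ℝ → Set ℝ → ℝ
  | 0 => fun x E => diracSF x E
  | n + 1 => fun x E => faIntegral (p2 x) fun y => p2n n y E

/-- The `n`-step transition function of CM3. -/
noncomputable def p3n : ℕ → ℝ → Set ℝ → ℝ
  | 0 => fun x E => diracSF x E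
  | n + 1 => fun x E => faIntegral (p3 x) fun y => p3n n y E

open Classical in
lemma diracSF_apply (y : ℝ) (E : Set ℝ) : diracSF y E = if y ∈ E then 1 else 0 :=
  Set.indicator_apply E _ y

lemma diracSF_nonneg (y : ℝ) (E : Set ℝ) : 0 ≤ diracSF y E := by
  classical
  rw [diracSF_apply]; split <;> norm_num

open Classical in
lemma integral_ite_lt (c : ℝ) (hc : c = 0 ∨ c = 1) :
    ∫ s in Set.Ioi (0:ℝ), (if s < c then (1:ℝ) else 0) = c := by
  have h : Set.EqOn (fun s => if s < c then (1:ℝ) else 0)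
      (fun s => (Set.Ioo (0:ℝ) c).indicator (fun _ => (1:ℝ)) s) (Set.Ioi 0) := by
    intro s hs
    simp only [Set.indicator_apply, Set.mem_Ioo]
    simp only [Set.mem_Ioi] at hs
    by_cases h : s < c <;> simp [h, hs]
  rw [setIntegral_congr_fun measurableSet_Ioi h,
    setIntegral_indicator measurableSet_Ioo]
  have : Set.Ioi (0:ℝ) ∩ Set.Ioo 0 c = Set.Ioo 0 c :=
    Set.inter_eq_self_of_subset_right Set.Ioo_subset_Ioi_self
  rw [this, setIntegral_const, Real.volume_real_Ioo, smul_eq_mul, mul_one]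
  rcases hc with rfl | rfl <;> simp

open Classical in
lemma integrableOn_ite_lt (c : ℝ) :
    MeasureTheory.IntegrableOn (fun s => if s < c then (1:ℝ) else 0) (Set.Ioi 0) := by
  have h : Set.EqOn (fun s => if s < c then (1:ℝ) else 0)
      (fun s => (Set.Ioo (0:ℝ) c).indicator (fun _ => (1:ℝ)) s) (Set.Ioi 0) := by
    intro s hs
    simp only [Set.indicator_apply, Set.mem_Ioo]
    simp only [Set.mem_Ioi] at hs
    by_cases h : s < c <;> simp [h, hs]
  apply MeasureTheory.IntegrableOn.congr_fun _ h.symm measurableSet_Ioi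
  apply MeasureTheory.Integrable.integrableOn
  rw [MeasureTheory.integrable_indicator_iff measurableSet_Ioo]
  exact MeasureTheory.integrableOn_const (by simp [Real.volume_Ioo])

lemma fa_mono {X : Type*} [MeasurableSpace X] {μ : Set X → ℝ} (hfa : IsFinAdd μ)
    (hnn : IsNonnegSF μ) {A B : Set X} (hA : MeasurableSet A) (hB : MeasurableSet B)
    (hAB : A ⊆ B) : μ A ≤ μ B := by
  have h := hfa.2 A (B \ A) hA (hB.diff hA) disjoint_sdiff_right
  rw [Set.union_diff_cancel hAB] at h
  have := hnn (B \ A) (hB.diff hA)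
  linarith

lemma fa_null_subset {X : Type*} [MeasurableSpace X] {μ : Set X → ℝ} (hfa : IsFinAdd μ)
    (hnn : IsNonnegSF μ) {A B : Set X} (hA : MeasurableSet A) (hB : MeasurableSet B)
    (hAB : A ⊆ B) (hB0 : μ B = 0) : μ A = 0 :=
  le_antisymm (hB0 ▸ fa_mono hfa hnn hA hB hAB) (hnn A hA)

lemma p3_level_pos {t : ℝ} (ht : 0 < t) :
    {x : ℝ | t < p3 x (Set.Ioo 0 1)} = Set.Ioo t (1 - t) := by
  classical
  ext x
  simp only [Set.mem_setOf_eq, Set.mem_Ioo, p3, diracSF_apply, Set.mem_Ioo]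
  split_ifs with h1 h2 h3 h4 <;>
  · constructor
    · intro h
      constructor <;> nlinarith [h1]
    · rintro ⟨ha, hb⟩
      first
        | nlinarith [h1]
        | (exfalso; apply ‹¬(0 < x ^ 2 ∧ x ^ 2 < 1)›; constructor <;> nlinarith)

lemma p3_level_neg {t : ℝ} (ht : 0 < t) :
    {x : ℝ | p3 x (Set.Ioo 0 1) < -t} = Set.Ioo (-1) (-t) := by
  classical
  ext x
  simp only [Set.mem_setOf_eq, Set.mem_Ioo, p3, diracSF_apply, Set.mem_Ioo]
  split_ifs with h1 h2 h3 h4 <;>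
  · constructor
    · intro h
      constructor <;> nlinarith [h1]
    · rintro ⟨ha, hb⟩
      first
        | nlinarith [h1]
        | (exfalso; apply ‹¬(0 < x ^ 2 ∧ x ^ 2 < 1)›; constructor <;> nlinarith)

lemma diracSF_hasSum (y : ℝ) (E : ℕ → Set ℝ) (hd : Pairwise (Disjoint on E)) :
    HasSum (fun n => diracSF y (E n)) (diracSF y (⋃ n, E n)) := by
  classical
  by_cases hy : y ∈ ⋃ n, E n
  · obtain ⟨n0, hn0⟩ := Set.mem_iUnion.mp hy
    have key : (fun n => diracSF y (E n)) = fun n => if n = n0 then (1:ℝ) else 0 := by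
      funext n
      rw [diracSF_apply]
      by_cases hn : n = n0
      · subst hn; simp [hn0]
      · have : y ∉ E n := fun hyn => (hd hn).le_bot ⟨hyn, hn0⟩
        simp [hn, this]
    rw [key, diracSF_apply, if_pos hy]
    exact hasSum_ite_eq n0 1
  · have key : (fun n => diracSF y (E n)) = fun _ => (0:ℝ) := by
      funext n
      rw [diracSF_apply, if_neg (fun h => hy (Set.mem_iUnion.mpr ⟨n, h⟩))]
    rw [key, diracSF_apply, if_neg hy]
    exact hasSum_zero

lemma diracSF_union (y : ℝ) {E F : Set ℝ} (hEF : Disjoint E F) :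
    diracSF y (E ∪ F) = diracSF y E + diracSF y F := by
  classical
  simp only [diracSF_apply, Set.mem_union]
  by_cases hE : y ∈ E <;> by_cases hF : y ∈ F
  · exact ((Set.disjoint_left.mp hEF hE) hF).elim
  all_goals simp [hE, hF]

lemma diracSF_zero_one (y : ℝ) (E : Set ℝ) : diracSF y E = 0 ∨ diracSF y E = 1 := by
  classical
  rw [diracSF_apply]; split_ifs <;> simp

lemma p3_zero (E : Set ℝ) : p3 0 E = diracSF 0 E := by norm_num [p3]

lemma p3_one (E : Set ℝ) : p3 1 E = diracSF 1 E := by norm_num [p3]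

/-- Invariant measures of CM3: every invariant finitely additive probability measure `μ`
satisfies `μ((0,1)) = 0` and is a convex combination `t·δ₀ + (1-t)·δ₁` (in particular it
is countably additive); conversely every such convex combination is an invariant finitely
additive probability measure. -/
theorem cm3_invariant_measures :
    (∀ μ : Set ℝ → ℝ, IsFinAdd μ → IsNonnegSF μ → μ Set.univ = 1 → μ (Set.Icc 0 1) = 1 →
      (∀ E : Set ℝ, MeasurableSet E → faIntegral μ (fun x => p3 x E) = μ E) →
      μ (Set.Ioo 0 1) = 0 ∧
      (∃ t ∈ Set.Icc (0:ℝ) 1, ∀ E : Set ℝ, MeasurableSet E →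
        μ E = t * diracSF 0 E + (1 - t) * diracSF 1 E) ∧
      IsCtblAdd μ) ∧
    (∀ t ∈ Set.Icc (0:ℝ) 1,
      IsFinAdd (fun E : Set ℝ => t * diracSF 0 E + (1 - t) * diracSF 1 E) ∧
      IsNonnegSF (fun E : Set ℝ => t * diracSF 0 E + (1 - t) * diracSF 1 E) ∧
      t * diracSF 0 Set.univ + (1 - t) * diracSF 1 Set.univ = 1 ∧
      t * diracSF 0 (Set.Icc 0 1) + (1 - t) * diracSF 1 (Set.Icc 0 1) = 1 ∧
      ∀ E : Set ℝ, MeasurableSet E →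
        faIntegral (fun F : Set ℝ => t * diracSF 0 F + (1 - t) * diracSF 1 F)
            (fun x => p3 x E) =
          t * diracSF 0 E + (1 - t) * diracSF 1 E) := by
  constructor
  · -- forward direction
    intro μ hfa hnn huniv hIcc hinv
    have hmono := fun {A B : Set ℝ} => fa_mono hfa hnn (A := A) (B := B)
    have hcompl : μ (Set.Icc (0:ℝ) 1)ᶜ = 0 := by
      have h := hfa.2 (Set.Icc 0 1) (Set.Icc 0 1)ᶜ measurableSet_Icc
        measurableSet_Icc.compl disjoint_compl_right
      rw [Set.union_compl_self] at h
      linarith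
    have hIoo : μ (Set.Ioo 0 1) = 0 := by
      have hinv1 := hinv (Set.Ioo 0 1) measurableSet_Ioo
      simp only [faIntegral] at hinv1
      have hneg : (∫ s in Set.Ioi (0:ℝ), μ {x | p3 x (Set.Ioo 0 1) < -s}) = 0 := by
        have heq : Set.EqOn (fun s => μ {x | p3 x (Set.Ioo 0 1) < -s})
            (fun _ => (0:ℝ)) (Set.Ioi 0) := by
          intro s hs
          have hs' : (0:ℝ) < s := hs
          show μ {x | p3 x (Set.Ioo 0 1) < -s} = 0
          rw [p3_level_neg hs']
          refine fa_null_subset hfa hnn measurableSet_Ioo measurableSet_Icc.compl ?_ hcompl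
          intro x hx
          simp only [Set.mem_compl_iff, Set.mem_Icc, not_and_or, not_le]
          left
          linarith [hx.2]
        rw [setIntegral_congr_fun measurableSet_Ioi heq, integral_zero]
      have hpos : (∫ s in Set.Ioi (0:ℝ), μ {x | s < p3 x (Set.Ioo 0 1)})
          = ∫ s in Set.Ioi (0:ℝ), μ (Set.Ioo s (1 - s)) := by
        refine setIntegral_congr_fun measurableSet_Ioi fun s hs => ?_
        have hs' : (0:ℝ) < s := hs
        show μ {x | s < p3 x (Set.Ioo 0 1)} = μ (Set.Ioo s (1 - s))
        rw [p3_level_pos hs']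
      rw [hpos, hneg, sub_zero] at hinv1
      by_cases hI : IntegrableOn (fun s => μ (Set.Ioo s (1 - s))) (Set.Ioi 0) volume
      · set M := μ (Set.Ioo (0:ℝ) 1) with hM
        have hMnn : 0 ≤ M := hnn _ measurableSet_Ioo
        have hb : ∀ s ∈ Set.Ioi (0:ℝ),
            μ (Set.Ioo s (1 - s)) ≤ (Set.Ioo (0:ℝ) (1/2)).indicator (fun _ => M) s := by
          intro s hs
          have hs' : (0:ℝ) < s := hs
          by_cases h2 : s < 1/2
          · rw [Set.indicator_of_mem (Set.mem_Ioo.mpr ⟨hs', h2⟩)]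
            exact hmono measurableSet_Ioo measurableSet_Ioo
              (Set.Ioo_subset_Ioo hs'.le (by linarith))
          · rw [Set.indicator_of_notMem (fun hmem => h2 hmem.2)]
            rw [Set.Ioo_eq_empty (by intro h; push_neg at h2; linarith)]
            exact le_of_eq hfa.1
        have hIind : IntegrableOn
            (fun s => (Set.Ioo (0:ℝ) (1/2)).indicator (fun _ => M) s) (Set.Ioi 0) := by
          apply Integrable.integrableOn
          rw [integrable_indicator_iff measurableSet_Ioo]
          exact integrableOn_const (by simp [Real.volume_Ioo])
        have hle := setIntegral_mono_on hI hIind measurableSet_Ioi hb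
        rw [setIntegral_indicator measurableSet_Ioo] at hle
        rw [Set.inter_eq_self_of_subset_right Set.Ioo_subset_Ioi_self] at hle
        rw [setIntegral_const, Real.volume_real_Ioo, smul_eq_mul] at hle
        rw [hinv1] at hle
        have h12 : max ((1:ℝ)/2 - 0) 0 = 1/2 := by
          norm_num
        rw [h12] at hle
        linarith
      · rw [integral_undef hI] at hinv1
        exact hinv1.symm
    have hN : μ (Set.Ioo (0:ℝ) 1 ∪ (Set.Icc (0:ℝ) 1)ᶜ) = 0 := by
      have hdisj : Disjoint (Set.Ioo (0:ℝ) 1) (Set.Icc (0:ℝ) 1)ᶜ :=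
        Set.disjoint_left.mpr (fun x hx hxc => hxc (Set.Ioo_subset_Icc_self hx))
      rw [hfa.2 _ _ measurableSet_Ioo measurableSet_Icc.compl hdisj, hIoo, hcompl]
      ring
    have hNmeas : MeasurableSet (Set.Ioo (0:ℝ) 1 ∪ (Set.Icc (0:ℝ) 1)ᶜ) :=
      measurableSet_Ioo.union measurableSet_Icc.compl
    set t := μ {(0:ℝ)} with htdef
    have hdecomp : ∀ E : Set ℝ, MeasurableSet E →
        μ E = μ (E ∩ {0}) + μ (E ∩ {1}) + μ (E \ ({0} ∪ {1})) := by
      intro E hE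
      have hm0 : MeasurableSet (E ∩ {(0:ℝ)}) := hE.inter (measurableSet_singleton 0)
      have hm1 : MeasurableSet (E ∩ {(1:ℝ)}) := hE.inter (measurableSet_singleton 1)
      have hmd : MeasurableSet (E \ ({(0:ℝ)} ∪ {1})) :=
        hE.diff ((measurableSet_singleton 0).union (measurableSet_singleton 1))
      have hsplit : E = ((E ∩ {0}) ∪ (E ∩ {1})) ∪ (E \ ({0} ∪ {1})) := by
        ext x
        simp only [Set.mem_union, Set.mem_inter_iff, Set.mem_singleton_iff, Set.mem_diff]
        constructor
        · intro hx
          by_cases h0 : x = 0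
          · exact Or.inl (Or.inl ⟨hx, h0⟩)
          · by_cases h1 : x = 1
            · exact Or.inl (Or.inr ⟨hx, h1⟩)
            · exact Or.inr ⟨hx, fun h => h.elim h0 h1⟩
        · rintro ((⟨h, _⟩ | ⟨h, _⟩) | ⟨h, _⟩) <;> exact h
      have hd01 : Disjoint (E ∩ {(0:ℝ)}) (E ∩ {(1:ℝ)}) := by
        apply Set.disjoint_left.mpr
        rintro x ⟨_, hx0⟩ ⟨_, hx1⟩
        rw [Set.mem_singleton_iff] at hx0 hx1
        rw [hx0] at hx1
        norm_num at hx1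
      have hd2 : Disjoint ((E ∩ {(0:ℝ)}) ∪ (E ∩ {1})) (E \ ({(0:ℝ)} ∪ {1})) := by
        apply Set.disjoint_left.mpr
        rintro x (⟨_, hx0⟩ | ⟨_, hx0⟩) ⟨_, hxn⟩ <;>
          exact hxn (by simp [Set.mem_singleton_iff.mp hx0])
      calc μ E = μ (((E ∩ {0}) ∪ (E ∩ {1})) ∪ (E \ ({0} ∪ {1}))) := by rw [← hsplit]
        _ = μ ((E ∩ {0}) ∪ (E ∩ {1})) + μ (E \ ({0} ∪ {1})) :=
            hfa.2 _ _ (hm0.union hm1) hmd hd2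
        _ = μ (E ∩ {0}) + μ (E ∩ {1}) + μ (E \ ({0} ∪ {1})) := by
            rw [hfa.2 _ _ hm0 hm1 hd01]
    have hdiffnull : ∀ E : Set ℝ, MeasurableSet E → μ (E \ ({(0:ℝ)} ∪ {1})) = 0 := by
      intro E hE
      refine fa_null_subset hfa hnn
        (hE.diff ((measurableSet_singleton 0).union (measurableSet_singleton 1)))
        hNmeas ?_ hN
      rintro x ⟨hxE, hxn⟩
      simp only [Set.mem_union, Set.mem_singleton_iff, not_or] at hxn
      obtain ⟨hx0, hx1⟩ := hxn
      simp only [Set.mem_union, Set.mem_Ioo, Set.mem_compl_iff]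
      by_cases hxI : x ∈ Set.Icc (0:ℝ) 1
      · exact Or.inl ⟨lt_of_le_of_ne hxI.1 (Ne.symm hx0), lt_of_le_of_ne hxI.2 hx1⟩
      · exact Or.inr hxI
    have hsing : ∀ (y : ℝ) (E : Set ℝ), μ (E ∩ {y}) = μ {y} * diracSF y E := by
      classical
      intro y E
      rw [diracSF_apply]
      by_cases h : y ∈ E
      · rw [if_pos h, mul_one,
          Set.inter_eq_self_of_subset_right (Set.singleton_subset_iff.mpr h)]
      · rw [if_neg h, mul_zero]
        have hempty : E ∩ {y} = ∅ := by
          ext z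
          simp only [Set.mem_inter_iff, Set.mem_singleton_iff, Set.mem_empty_iff_false,
            iff_false, not_and]
          rintro hz rfl
          exact h hz
        rw [hempty, hfa.1]
    have h1val : μ {(1:ℝ)} = 1 - t := by
      have h := hdecomp (Set.Icc 0 1) measurableSet_Icc
      rw [hIcc, hdiffnull _ measurableSet_Icc, hsing 0, hsing 1] at h
      norm_num [diracSF_apply, Set.mem_Icc] at h
      linarith
    have hrep : ∀ E : Set ℝ, MeasurableSet E →
        μ E = t * diracSF 0 E + (1 - t) * diracSF 1 E := by
      intro E hE
      rw [hdecomp E hE, hdiffnull E hE, hsing 0 E, hsing 1 E, h1val, add_zero]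
    refine ⟨hIoo, ⟨t, ⟨hnn _ (measurableSet_singleton 0), ?_⟩, hrep⟩, ?_⟩
    · calc t ≤ μ Set.univ :=
          hmono (measurableSet_singleton 0) MeasurableSet.univ (Set.subset_univ _)
        _ = 1 := huniv
    · intro E hEm hEd
      have hfn : (fun n => μ (E n))
          = fun n => t * diracSF 0 (E n) + (1 - t) * diracSF 1 (E n) :=
        funext fun n => hrep _ (hEm n)
      rw [hfn, hrep _ (MeasurableSet.iUnion hEm)]
      exact ((diracSF_hasSum 0 E hEd).mul_left t).add ((diracSF_hasSum 1 E hEd).mul_left (1 - t))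
  · -- converse direction
    rintro t ⟨ht0, ht1⟩
    refine ⟨⟨?_, ?_⟩, ?_, ?_, ?_, ?_⟩
    · simp [diracSF]
    · intro E F hE hF hEF
      simp only
      rw [diracSF_union 0 hEF, diracSF_union 1 hEF]
      ring
    · intro E _
      have h0 := diracSF_nonneg 0 E
      have h1 := diracSF_nonneg 1 E
      have hm0 := mul_nonneg ht0 h0
      have hm1 := mul_nonneg (by linarith : (0:ℝ) ≤ 1 - t) h1
      simp only
      linarith
    · norm_num [diracSF_apply]
    · norm_num [diracSF_apply, Set.mem_Icc]
    · intro E hE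
      simp only [faIntegral]
      have hp0 := p3_zero E
      have hp1 := p3_one E
      have hposEq : Set.EqOn
          (fun s => t * diracSF 0 {x | s < p3 x E} + (1 - t) * diracSF 1 {x | s < p3 x E})
          (fun s => t * (if s < diracSF 0 E then (1:ℝ) else 0)
            + (1 - t) * (if s < diracSF 1 E then (1:ℝ) else 0)) (Set.Ioi 0) := by
        intro s _
        simp only [diracSF_apply 0 {x | s < p3 x E}, diracSF_apply 1 {x | s < p3 x E},
          Set.mem_setOf_eq, hp0, hp1]
      have hnegEq : Set.EqOn
          (fun s => t * diracSF 0 {x | p3 x E < -s} + (1 - t) * diracSF 1 {x | p3 x E < -s})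
          (fun _ => (0:ℝ)) (Set.Ioi 0) := by
        intro s hs
        have hs' : (0:ℝ) < s := hs
        simp only [diracSF_apply 0 {x | p3 x E < -s}, diracSF_apply 1 {x | p3 x E < -s},
          Set.mem_setOf_eq, hp0, hp1]
        rw [if_neg (by linarith [diracSF_nonneg 0 E]), if_neg (by linarith [diracSF_nonneg 1 E])]
        ring
      rw [setIntegral_congr_fun measurableSet_Ioi hposEq,
        setIntegral_congr_fun measurableSet_Ioi hnegEq, integral_zero, sub_zero]
      rw [integral_add ((integrableOn_ite_lt (diracSF 0 E)).const_mul t)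
        ((integrableOn_ite_lt (diracSF 1 E)).const_mul (1 - t))]
      rw [integral_const_mul, integral_const_mul,
        integral_ite_lt _ (diracSF_zero_one 0 E), integral_ite_lt _ (diracSF_zero_one 1 E)]
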